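/- Let (Ω, 𝓕, μ) be a probability space. Let g : Ω → ℝ be a random variable whose law has density 1_{[-1,-1/2]} + 1_{[1/2,1]} with respect to Lebesgue measure. For k ≥ 0 set p_k = ((√2 − 1)/√2)·2^{-k/2}, and for positive constants L₁, L₂ set d_k = p_k/L₁ if k is even and d_k = p_k/L₂ if k is odd. Let (G_k)_{k≥0} be a measurable partition of Ω with μ(G_k) = p_k for all k, such that the σ-algebra σ(G_k : k ≥ 0) is independent of σ(g). Set h = Σ_{k=0}^∞ d_k·1_{G_k} and f = g·h. Then the law of f is absolutely continuous with respect to Lebesgue measure and admits a density bounded by L₁ + L₂. -/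

import Mathlib

open MeasureTheory ProbabilityTheory Set
open scoped ENNReal

lemma map_mul_withDensity (a : ℝ) (ha : 0 < a) (w : ℝ → ℝ≥0∞) (hw : Measurable w) :
    Measure.map (fun x => a * x) (volume.withDensity w)
      = volume.withDensity (fun x => ENNReal.ofReal a⁻¹ * w (x / a)) := by
  have hma : Measurable fun x : ℝ => a * x := measurable_const_mul a
  have hu : Measurable fun x : ℝ => ENNReal.ofReal a⁻¹ * w (x / a) :=
    (hw.comp (measurable_id.div_const a)).const_mul _
  have hone : ENNReal.ofReal a * ENNReal.ofReal a⁻¹ = 1 := by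
    rw [← ENNReal.ofReal_mul ha.le, mul_inv_cancel₀ ha.ne', ENNReal.ofReal_one]
  have hvol : (volume : Measure ℝ)
      = ENNReal.ofReal a • Measure.map (fun x => a * x) volume := by
    rw [Real.map_volume_mul_left ha.ne', smul_smul, abs_of_pos (inv_pos.2 ha), hone, one_smul]
  ext A hA
  rw [Measure.map_apply hma hA, withDensity_apply _ (hma hA), withDensity_apply _ hA]
  symm
  calc ∫⁻ x in A, ENNReal.ofReal a⁻¹ * w (x / a)
      = ENNReal.ofReal a *
        ∫⁻ x in A, ENNReal.ofReal a⁻¹ * w (x / a) ∂(Measure.map (fun x => a * x) volume) := by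
        conv_lhs => rw [hvol]
        rw [Measure.restrict_smul, lintegral_smul_measure, smul_eq_mul]
    _ = ENNReal.ofReal a *
        ∫⁻ x in (fun x => a * x) ⁻¹' A, ENNReal.ofReal a⁻¹ * w ((a * x) / a) := by
        rw [setLIntegral_map hA hu hma]
    _ = ∫⁻ x in (fun x => a * x) ⁻¹' A, w x := by
        simp_rw [mul_div_cancel_left₀ _ ha.ne', ← lintegral_const_mul _ (hw.const_mul _),
          ← mul_assoc, hone, one_mul]

lemma indicator_ST (y : ℝ) (hy1 : y ≠ -(1/2)) (hy2 : y ≠ 1/2) :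
    (Icc (-1 : ℝ) (-(1/2)) ∪ Icc (1/2) 1).indicator (1 : ℝ → ℝ≥0∞) y
      = (Ico (-1 : ℝ) (-(1/2)) ∪ Ioc (1/2) 1).indicator 1 y := by
  have hmem : (y ∈ Icc (-1 : ℝ) (-(1/2)) ∪ Icc (1/2) 1)
      ↔ (y ∈ Ico (-1 : ℝ) (-(1/2)) ∪ Ioc (1/2) 1) := by
    simp only [mem_union, mem_Icc, mem_Ico, mem_Ioc]
    constructor
    · rintro (⟨h1, h2⟩ | ⟨h1, h2⟩)
      · exact Or.inl ⟨h1, lt_of_le_of_ne h2 hy1⟩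
      · exact Or.inr ⟨lt_of_le_of_ne h1 (Ne.symm hy2), h2⟩
    · rintro (⟨h1, h2⟩ | ⟨h1, h2⟩)
      · exact Or.inl ⟨h1, h2.le⟩
      · exact Or.inr ⟨h1.le, h2⟩
  simp only [Set.indicator_apply, hmem]

theorem stmt10 {Ω : Type*} [MeasurableSpace Ω] (μ : Measure Ω) [IsProbabilityMeasure μ]
    (g : Ω → ℝ) (hg : Measurable g)
    (hglaw : μ.map g = volume.withDensity
      ((Set.Icc (-1 : ℝ) (-(1/2)) ∪ Set.Icc (1/2) 1).indicator 1))
    (L₁ L₂ : ℝ) (hL₁ : 0 < L₁) (hL₂ : 0 < L₂)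
    (p d : ℕ → ℝ)
    (hp : ∀ k, p k = ((Real.sqrt 2 - 1) / Real.sqrt 2) * (2 : ℝ) ^ (-(k : ℝ) / 2))
    (hd : ∀ k, d k = if Even k then p k / L₁ else p k / L₂)
    (G : ℕ → Set Ω) (hGmeas : ∀ k, MeasurableSet (G k))
    (hGdisj : Pairwise (Function.onFun Disjoint G)) (hGcover : ⋃ k, G k = Set.univ)
    (hGmass : ∀ k, μ (G k) = ENNReal.ofReal (p k))
    (hGindep : Indep (MeasurableSpace.generateFrom (Set.range G))
      (MeasurableSpace.comap g Real.measurableSpace) μ)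
    (h f : Ω → ℝ)
    (hh : ∀ ω, h ω = ∑' k, (G k).indicator (fun _ => d k) ω)
    (hf : ∀ ω, f ω = g ω * h ω) :
    ∃ ρ : ℝ → ℝ≥0∞, μ.map f = volume.withDensity ρ ∧
      ∀ x, ρ x ≤ ENNReal.ofReal (L₁ + L₂) := by
  classical
  -- basic positivity
  have hsqrt2 : (1 : ℝ) < Real.sqrt 2 := by
    rw [show (1 : ℝ) = Real.sqrt 1 from (Real.sqrt_one).symm]
    exact Real.sqrt_lt_sqrt (by norm_num) (by norm_num)
  have hppos : ∀ k, 0 < p k := by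
    intro k
    rw [hp k]
    have h1 : 0 < (Real.sqrt 2 - 1) / Real.sqrt 2 :=
      div_pos (by linarith) (by linarith)
    exact mul_pos h1 (Real.rpow_pos_of_pos (by norm_num) _)
  set ℓ : ℕ → ℝ := fun k => if Even k then L₁ else L₂ with hℓ
  have hℓpos : ∀ k, 0 < ℓ k := by
    intro k; simp only [hℓ]; split_ifs <;> assumption
  have hdℓ : ∀ k, d k = p k / ℓ k := by
    intro k; rw [hd k]; simp only [hℓ]; split_ifs <;> rfl
  have hdpos : ∀ k, 0 < d k := fun k => by
    rw [hdℓ k]; exact div_pos (hppos k) (hℓpos k)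
  -- gap lemma
  have hgap : ∀ k j, k < j → (Even k ↔ Even j) → d j ≤ d k / 2 := by
    intro k j hkj hpar
    have hj2 : k + 2 ≤ j := by
      rcases Nat.lt_or_ge j (k + 2) with hlt | hge
      · exfalso
        have hj1 : j = k + 1 := by omega
        rw [hj1, Nat.even_add_one] at hpar
        exact iff_not_self hpar
      · exact hge
    have hpj : p j ≤ p k / 2 := by
      rw [hp j, hp k]
      have hexp : (2 : ℝ) ^ (-(j : ℝ) / 2) ≤ (2 : ℝ) ^ (-(k : ℝ) / 2 - 1) := by
        apply Real.rpow_le_rpow_of_exponent_le one_le_two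
        have : (k : ℝ) + 2 ≤ (j : ℝ) := by exact_mod_cast hj2
        linarith
      have hsub : (2 : ℝ) ^ (-(k : ℝ) / 2 - 1) = (2 : ℝ) ^ (-(k : ℝ) / 2) / 2 := by
        rw [Real.rpow_sub (by norm_num), Real.rpow_one]
      have hc : 0 < (Real.sqrt 2 - 1) / Real.sqrt 2 := div_pos (by linarith) (by linarith)
      rw [hsub] at hexp
      calc ((Real.sqrt 2 - 1) / Real.sqrt 2) * (2 : ℝ) ^ (-(j : ℝ) / 2)
          ≤ ((Real.sqrt 2 - 1) / Real.sqrt 2) * ((2 : ℝ) ^ (-(k : ℝ) / 2) / 2) := by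
            exact mul_le_mul_of_nonneg_left hexp hc.le
        _ = ((Real.sqrt 2 - 1) / Real.sqrt 2) * (2 : ℝ) ^ (-(k : ℝ) / 2) / 2 := by ring
    have hℓeq : ℓ j = ℓ k := by simp only [hℓ]; rw [if_congr hpar.symm rfl rfl]
    rw [hdℓ j, hdℓ k, hℓeq]
    rw [div_le_div_iff₀ (hℓpos k) (by positivity)]
    have hcanc : p k / ℓ k * ℓ k = p k := div_mul_cancel₀ _ (hℓpos k).ne'
    linarith
  -- the half-open target set
  set T : Set ℝ := Ico (-1 : ℝ) (-(1/2)) ∪ Ioc (1/2) 1 with hT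
  -- uniqueness of active index per parity
  have hkey : ∀ x k j, k < j → (Even k ↔ Even j) → x / d k ∈ T → x / d j ∈ T → False := by
    intro x k j hkj hpar hk hj
    have hdk := hdpos k
    have hdj := hdpos j
    have hg2 : d j ≤ d k / 2 := hgap k j hkj hpar
    simp only [hT, mem_union, mem_Ico, mem_Ioc] at hk hj
    rcases hk with ⟨hk1, hk2⟩ | ⟨hk1, hk2⟩
    · have hx : x < -(1/2) * d k := (div_lt_iff₀ hdk).1 hk2
      rcases hj with ⟨hj1, hj2⟩ | ⟨hj1, hj2⟩
      · have hx2 : (-1 : ℝ) * d j ≤ x := (le_div_iff₀ hdj).1 hj1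
        linarith
      · have hx2 : (1/2 : ℝ) * d j < x := (lt_div_iff₀ hdj).1 hj1
        linarith
    · have hx : (1/2 : ℝ) * d k < x := (lt_div_iff₀ hdk).1 hk1
      rcases hj with ⟨hj1, hj2⟩ | ⟨hj1, hj2⟩
      · have hx2 : x < -(1/2) * d j := (div_lt_iff₀ hdj).1 hj2
        linarith
      · have hx2 : x ≤ d j := (div_le_one hdj).1 hj2
        linarith
  have huniq : ∀ x k j, (Even k ↔ Even j) → x / d k ∈ T → x / d j ∈ T → k = j := by
    intro x k j hpar hk hj
    rcases lt_trichotomy k j with hlt | heq | hgt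
    · exact absurd (hkey x k j hlt hpar hk hj) (not_false)
    · exact heq
    · exact absurd (hkey x j k hgt hpar.symm hj hk) (not_false)
  -- h is constant d k on G k
  have hhval : ∀ k, ∀ ω ∈ G k, h ω = d k := by
    intro k ω hω
    rw [hh ω]
    rw [tsum_eq_single k]
    · simp [Set.indicator_of_mem hω]
    · intro j hjk
      have : ω ∉ G j := by
        intro hωj
        exact (Set.disjoint_left.1 (hGdisj hjk)) hωj hω
      simp [Set.indicator_of_notMem this]
  -- measurability of h and f
  have hhmeas : Measurable h := by
    intro s hs
    have : h ⁻¹' s = ⋃ k, if d k ∈ s then G k else ∅ := by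
      ext ω
      simp only [Set.mem_preimage, Set.mem_iUnion]
      constructor
      · intro hω
        have : ω ∈ ⋃ k, G k := by rw [hGcover]; trivial
        obtain ⟨k, hk⟩ := Set.mem_iUnion.1 this
        refine ⟨k, ?_⟩
        rw [if_pos]
        · exact hk
        · rwa [← hhval k ω hk]
      · rintro ⟨k, hk⟩
        split_ifs at hk with hdk
        · rwa [hhval k ω hk]
        · exact absurd hk (Set.notMem_empty ω)
    rw [this]
    exact MeasurableSet.iUnion fun k => by split_ifs <;> simp [hGmeas k]
  have hfmeas : Measurable f := by
    have : f = fun ω => g ω * h ω := funext hf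
    rw [this]
    exact hg.mul hhmeas
  -- abbreviations
  set S : Set ℝ := Icc (-1 : ℝ) (-(1/2)) ∪ Icc (1/2) 1 with hS
  set w : ℝ → ℝ≥0∞ := S.indicator 1 with hw
  have hwmeas : Measurable w :=
    Measurable.indicator measurable_const (measurableSet_Icc.union measurableSet_Icc)
  set ν : Measure ℝ := μ.map g with hν
  -- the independence step
  have hindep := (Indep_iff _ _ μ).1 hGindep
  have hstep : ∀ (k : ℕ) (B : Set ℝ), MeasurableSet B →
      μ (G k ∩ g ⁻¹' B) = ENNReal.ofReal (p k) * ν B := by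
    intro k B hB
    rw [hindep (G k) (g ⁻¹' B)
      (MeasurableSpace.measurableSet_generateFrom ⟨k, rfl⟩) ⟨B, hB, rfl⟩,
      hGmass k, hν, Measure.map_apply hg hB]
  -- the decomposition of the law of f
  have hlaw : μ.map f = Measure.sum
      (fun k => ENNReal.ofReal (p k) • Measure.map (fun x => d k * x) ν) := by
    ext A hA
    rw [Measure.map_apply hfmeas hA, Measure.sum_apply _ hA]
    have hdecomp : f ⁻¹' A = ⋃ k, G k ∩ f ⁻¹' A := by
      rw [← Set.iUnion_inter, hGcover, Set.univ_inter]
    rw [hdecomp, measure_iUnion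
      (hGdisj.mono fun i j hij => hij.mono Set.inter_subset_left Set.inter_subset_left)
      (fun k => (hGmeas k).inter (hfmeas hA))]
    congr 1
    ext k
    have hBk : MeasurableSet ((fun x => d k * x) ⁻¹' A) := measurable_const_mul (d k) hA
    have hset : G k ∩ f ⁻¹' A = G k ∩ g ⁻¹' ((fun x => d k * x) ⁻¹' A) := by
      ext ω
      simp only [Set.mem_inter_iff, Set.mem_preimage, and_congr_right_iff]
      intro hω
      rw [hf ω, hhval k ω hω, mul_comm]
    rw [hset, hstep k _ hBk, Measure.smul_apply, smul_eq_mul,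
      Measure.map_apply (measurable_const_mul (d k)) hA]
  -- compute each pushforward
  have hmapk : ∀ k, Measure.map (fun x => d k * x) ν
      = volume.withDensity (fun x => ENNReal.ofReal (d k)⁻¹ * w (x / d k)) := by
    intro k
    rw [hglaw]
    exact map_mul_withDensity (d k) (hdpos k) w hwmeas
  set v : ℕ → ℝ → ℝ≥0∞ :=
    fun k x => ENNReal.ofReal (p k) * (ENNReal.ofReal (d k)⁻¹ * w (x / d k)) with hv
  have hvmeas : ∀ k, Measurable (v k) :=
    fun k => ((hwmeas.comp (measurable_id.div_const (d k))).const_mul _).const_mul _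
  have hlaw2 : μ.map f = volume.withDensity (∑' k, v k) := by
    rw [hlaw, withDensity_tsum hvmeas]
    congr 1
    ext k : 1
    rw [hmapk k, ← withDensity_smul (ENNReal.ofReal (p k))
      (f := fun x => ENNReal.ofReal (d k)⁻¹ * w (x / d k))
      ((hwmeas.comp (measurable_id.div_const (d k))).const_mul _)]
    rfl
  -- the final density
  set ρ : ℝ → ℝ≥0∞ :=
    fun x => ∑' k, ENNReal.ofReal (ℓ k) * T.indicator 1 (x / d k) with hρ
  refine ⟨ρ, ?_, ?_⟩
  · rw [hlaw2]
    apply withDensity_congr_ae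
    set N : Set ℝ := ⋃ k, ({(1/2) * d k, -(1/2) * d k} : Set ℝ) with hN
    have hNc : N.Countable :=
      Set.countable_iUnion fun k => (Set.toFinite _).countable
    have hN0 : volume N = 0 := hNc.measure_zero _
    have hae : ∀ᵐ x ∂(volume : Measure ℝ), x ∉ N :=
      measure_eq_zero_iff_ae_notMem.mp hN0
    filter_upwards [hae] with x hx
    rw [ENNReal.tsum_apply, hρ]
    apply tsum_congr
    intro k
    have hxk1 : x / d k ≠ 1/2 := by
      intro hc
      apply hx
      rw [hN, Set.mem_iUnion]
      refine ⟨k, ?_⟩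
      rw [Set.mem_insert_iff]
      exact Or.inl ((div_eq_iff (hdpos k).ne').1 hc)
    have hxk2 : x / d k ≠ -(1/2) := by
      intro hc
      apply hx
      rw [hN, Set.mem_iUnion]
      refine ⟨k, ?_⟩
      rw [Set.mem_insert_iff, Set.mem_singleton_iff]
      exact Or.inr ((div_eq_iff (hdpos k).ne').1 hc)
    have hwT : w (x / d k) = T.indicator 1 (x / d k) := indicator_ST _ hxk2 hxk1
    have hcoef : ENNReal.ofReal (p k) * ENNReal.ofReal (d k)⁻¹ = ENNReal.ofReal (ℓ k) := by
      rw [← ENNReal.ofReal_mul (hppos k).le]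
      congr 1
      rw [hdℓ k]
      field_simp
      exact mul_div_cancel_left₀ _ (hppos k).ne'
    rw [hv]
    simp only [← mul_assoc, hcoef, hwT]
  · intro x
    have hindle : ∀ y : ℝ, T.indicator (1 : ℝ → ℝ≥0∞) y ≤ 1 := by
      intro y
      by_cases hy : y ∈ T <;> simp [Set.indicator_apply, hy]
    set E : ℕ → ℝ≥0∞ := fun k =>
      if Even k then ENNReal.ofReal L₁ * T.indicator 1 (x / d k) else 0 with hE
    set O : ℕ → ℝ≥0∞ := fun k =>
      if Even k then 0 else ENNReal.ofReal L₂ * T.indicator 1 (x / d k) with hO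
    have hsplit : ρ x = (∑' k, E k) + (∑' k, O k) := by
      rw [hρ, ← ENNReal.tsum_add]
      apply tsum_congr
      intro k
      simp only [hE, hO, hℓ]
      split_ifs <;> simp
    have hEbound : (∑' k, E k) ≤ ENNReal.ofReal L₁ := by
      by_cases hex : ∃ k, Even k ∧ x / d k ∈ T
      · obtain ⟨k₀, hk₀e, hk₀m⟩ := hex
        rw [tsum_eq_single k₀]
        · simp only [hE, if_pos hk₀e]
          calc ENNReal.ofReal L₁ * T.indicator 1 (x / d k₀)
              ≤ ENNReal.ofReal L₁ * 1 := mul_le_mul_right (hindle _) _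
            _ = ENNReal.ofReal L₁ := mul_one _
        · intro j hj
          simp only [hE]
          split_ifs with hje
          · by_cases hjm : x / d j ∈ T
            · exact absurd (huniq x j k₀ (iff_of_true hje hk₀e) hjm hk₀m) hj
            · simp [Set.indicator_of_notMem hjm]
          · rfl
      · push_neg at hex
        have : ∀ k, E k = 0 := by
          intro k
          simp only [hE]
          split_ifs with hke
          · simp [Set.indicator_of_notMem (hex k hke)]
          · rfl
        simp [this]
    have hObound : (∑' k, O k) ≤ ENNReal.ofReal L₂ := by
      by_cases hex : ∃ k, ¬Even k ∧ x / d k ∈ T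
      · obtain ⟨k₀, hk₀e, hk₀m⟩ := hex
        rw [tsum_eq_single k₀]
        · simp only [hO, if_neg hk₀e]
          calc ENNReal.ofReal L₂ * T.indicator 1 (x / d k₀)
              ≤ ENNReal.ofReal L₂ * 1 := mul_le_mul_right (hindle _) _
            _ = ENNReal.ofReal L₂ := mul_one _
        · intro j hj
          simp only [hO]
          split_ifs with hje
          · rfl
          · by_cases hjm : x / d j ∈ T
            · refine absurd (huniq x j k₀ ?_ hjm hk₀m) hj
              simp [hje, hk₀e]
            · simp [Set.indicator_of_notMem hjm]
      · push_neg at hex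
        have : ∀ k, O k = 0 := by
          intro k
          simp only [hO]
          split_ifs with hke
          · rfl
          · simp [Set.indicator_of_notMem (hex k hke)]
        simp [this]
    calc ρ x = (∑' k, E k) + (∑' k, O k) := hsplit
      _ ≤ ENNReal.ofReal L₁ + ENNReal.ofReal L₂ := add_le_add hEbound hObound
      _ = ENNReal.ofReal (L₁ + L₂) := (ENNReal.ofReal_add hL₁.le hL₂.le).symm
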